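/- In a parity game, for every position q, exactly one of the two players has a winning strategy from q, and moreover each player Π has a single positional strategy f_Π that is winning from every position in the winning region of Π. -/

import Mathlib

/-- A game board: each position has an owner (a player, `false` or `true`)
and a set of admissible moves. -/
structure Game (B : Type*) where
  owner : B → Bool
  E : B → B → Prop

namespace Game

variable {B : Type*} (G : Game B)

/-- An infinite play respecting the move relation. -/
def InfPlay (p : ℕ → B) : Prop := ∀ n, G.E (p n) (p (n + 1))

/-- A finite full play: a nonempty path whose last position is stuck. -/
def FinPlay (l : List B) : Prop :=
  l ≠ [] ∧ l.Chain' G.E ∧ ∀ b, l.getLast? = some b → ∀ c, ¬ G.E b c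

/-- An infinite play guided by a positional strategy `f` of player `pl`. -/
def PosGuidedInf (pl : Bool) (f : B → B) (p : ℕ → B) : Prop :=
  ∀ n, G.owner (p n) = pl → p (n + 1) = f (p n)

/-- A finite path guided by a positional strategy `f` of player `pl`. -/
def PosGuidedFin (pl : Bool) (f : B → B) (l : List B) : Prop :=
  ∀ i b c, l[i]? = some b → l[i + 1]? = some c → G.owner b = pl → c = f b

/-- A positional strategy is legal if it always picks admissible moves. -/
def PosLegal (pl : Bool) (f : B → B) : Prop :=
  ∀ b, G.owner b = pl → (∃ c, G.E b c) → G.E b (f b)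

/-- An infinite play guided by a general (history-dependent) strategy. -/
def GuidedInf (pl : Bool) (σ : List B → B) (p : ℕ → B) : Prop :=
  ∀ n, G.owner (p n) = pl → p (n + 1) = σ ((List.range (n + 1)).map p)

/-- A finite path guided by a general strategy. -/
def GuidedFin (pl : Bool) (σ : List B → B) (l : List B) : Prop :=
  ∀ i b c, l[i]? = some b → l[i + 1]? = some c → G.owner b = pl →
    c = σ (l.take (i + 1))

/-- Legality of a general strategy. -/
def Legal (pl : Bool) (σ : List B → B) : Prop :=
  ∀ l b, l.getLast? = some b → G.owner b = pl → (∃ c, G.E b c) → G.E b (σ l)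

/-- Player `pl` wins an infinite play of a parity game with priority map `Ω`:
the maximal priority occurring infinitely often has parity `pl`. -/
def ParityWins (Ω : B → ℕ) (pl : Bool) (p : ℕ → B) : Prop :=
  ∃ k, (k % 2 = cond pl 1 0) ∧ (∀ N, ∃ n ≥ N, Ω (p n) = k) ∧
    ∀ j, (∀ N, ∃ n ≥ N, Ω (p n) = j) → j ≤ k

/-- Player `pl`'s general strategy `σ` is winning from `q` in the parity game. -/
def WinsGen (Ω : B → ℕ) (pl : Bool) (σ : List B → B) (q : B) : Prop :=
  G.Legal pl σ ∧
    (∀ l, l.head? = some q → G.FinPlay l → G.GuidedFin pl σ l →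
      ∀ b, l.getLast? = some b → G.owner b ≠ pl) ∧
    (∀ p, p 0 = q → G.InfPlay p → G.GuidedInf pl σ p → Game.ParityWins Ω pl p)

/-- Player `pl`'s positional strategy `f` is winning from `q`. -/
def WinsPos (Ω : B → ℕ) (pl : Bool) (f : B → B) (q : B) : Prop :=
  G.PosLegal pl f ∧
    (∀ l, l.head? = some q → G.FinPlay l → G.PosGuidedFin pl f l →
      ∀ b, l.getLast? = some b → G.owner b ≠ pl) ∧
    (∀ p, p 0 = q → G.InfPlay p → G.PosGuidedInf pl f p → Game.ParityWins Ω pl p)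

end Game


attribute [local instance] Classical.propDecidable

namespace Game

variable {B : Type*}

/-- A default legal move. -/
noncomputable def dmove (G : Game B) (b : B) : B :=
  if h : ∃ c, G.E b c then h.choose else b

lemma dmove_spec (G : Game B) (b : B) (h : ∃ c, G.E b c) : G.E b (G.dmove b) := by
  rw [Game.dmove, dif_pos h]; exact h.choose_spec

lemma parityWins_shift {Ω : B → ℕ} {pl : Bool} {p : ℕ → B} (T : ℕ)
    (h : ParityWins Ω pl (fun n => p (n + T))) : ParityWins Ω pl p := by
  obtain ⟨k, hk, hio, hmax⟩ := h
  refine ⟨k, hk, ?_, ?_⟩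
  · intro N
    obtain ⟨n, hn, he⟩ := hio N
    exact ⟨n + T, le_trans hn (Nat.le_add_right _ _), he⟩
  · intro j hj
    apply hmax
    intro N
    obtain ⟨n, hn, he⟩ := hj (N + T)
    refine ⟨n - T, by omega, ?_⟩
    show Ω (p (n - T + T)) = j
    rwa [Nat.sub_add_cancel (by omega)]

lemma parityWins_congr {Ω Ω' : B → ℕ} {pl : Bool} {p : ℕ → B}
    (h : ∀ n, Ω' (p n) = Ω (p n)) (hw : ParityWins Ω' pl p) : ParityWins Ω pl p := by
  simpa only [ParityWins, h] using hw

lemma parityWins_not_both {Ω : B → ℕ} {p : ℕ → B}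
    (h0 : ParityWins Ω false p) (h1 : ParityWins Ω true p) : False := by
  obtain ⟨k0, hk0, hio0, hmax0⟩ := h0
  obtain ⟨k1, hk1, hio1, hmax1⟩ := h1
  have e1 : k0 ≤ k1 := hmax1 k0 hio0
  have e2 : k1 ≤ k0 := hmax0 k1 hio1
  have : k0 = k1 := le_antisymm e1 e2
  simp only [cond] at hk0 hk1
  omega

/-- The paradise predicate: `g` is a positional strategy for `pl` that keeps
plays inside `U` and wins all infinite plays from `U`. -/
structure Par (G : Game B) (Ω : B → ℕ) (pl : Bool) (U : Set B) (g : B → B) : Prop where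
  legal : G.PosLegal pl g
  closedOp : ∀ v ∈ U, G.owner v ≠ pl → ∀ w, G.E v w → w ∈ U
  closedOwn : ∀ v ∈ U, G.owner v = pl → (∃ w, G.E v w) → g v ∈ U
  stuckOp : ∀ v ∈ U, (∀ w, ¬ G.E v w) → G.owner v ≠ pl
  wins : ∀ p, p 0 ∈ U → G.InfPlay p → G.PosGuidedInf pl g p → ParityWins Ω pl p

variable {G : Game B} {Ω : B → ℕ} {pl : Bool} {U : Set B} {g : B → B}

lemma Par.stayInf (h : G.Par Ω pl U g) {p : ℕ → B} (h0 : p 0 ∈ U)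
    (hp : G.InfPlay p) (hg : G.PosGuidedInf pl g p) : ∀ n, p n ∈ U := by
  intro n
  induction n with
  | zero => exact h0
  | succ n ih =>
    by_cases ho : G.owner (p n) = pl
    · rw [hg n ho]; exact h.closedOwn _ ih ho ⟨_, hp n⟩
    · exact h.closedOp _ ih ho _ (hp n)

lemma chain'_rel {l : List B} (hc : l.Chain' G.E) {i : ℕ} {b c : B}
    (hb : l[i]? = some b) (hc2 : l[i + 1]? = some c) : G.E b c := by
  rw [show l.Chain' G.E ↔ _ from List.isChain_iff_getElem] at hc
  have hi1 : i + 1 < l.length := by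
    by_contra hcon
    rw [List.getElem?_eq_none (by omega)] at hc2
    cases hc2
  have := hc i (by omega)
  rw [List.getElem?_eq_getElem (by omega)] at hb
  rw [List.getElem?_eq_getElem hi1] at hc2
  rw [Option.some_inj] at hb hc2
  rwa [hb, hc2] at this

lemma Par.stayFin (h : G.Par Ω pl U g) {l : List B} {q : B}
    (hc : l.Chain' G.E) (hg : G.PosGuidedFin pl g l) (hh : l.head? = some q)
    (hq : q ∈ U) : ∀ (i : ℕ) (b : B), l[i]? = some b → b ∈ U := by
  intro i
  induction i with
  | zero =>
    intro b hb
    rw [show l.head? = l[0]? from by cases l <;> simp, hb] at hh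
    rw [Option.some_inj.mp hh]
    exact hq
  | succ i ih =>
    intro c hcs
    have hi1 : i + 1 < l.length := by
      by_contra hcon
      rw [List.getElem?_eq_none (by omega)] at hcs
      cases hcs
    obtain ⟨b, hb⟩ : ∃ b, l[i]? = some b := by
      rw [List.getElem?_eq_getElem (by omega)]; exact ⟨_, rfl⟩
    have hbU := ih b hb
    have hE : G.E b c := chain'_rel hc hb hcs
    by_cases ho : G.owner b = pl
    · rw [hg i b c hb hcs ho]; exact h.closedOwn _ hbU ho ⟨_, hE⟩
    · exact h.closedOp _ hbU ho _ hE

lemma Par.winsPos (h : G.Par Ω pl U g) {q : B} (hq : q ∈ U) : G.WinsPos Ω pl g q := by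
  refine ⟨h.legal, ?_, ?_⟩
  · intro l hh hfp hgf b hlast
    have hb : b ∈ U := by
      refine Par.stayFin h hfp.2.1 hgf hh hq (l.length - 1) b ?_
      rwa [← List.getLast?_eq_getElem?]
    exact h.stuckOp b hb (fun c => hfp.2.2 b hlast c)
  · intro p hp0 hip hgp
    exact h.wins p (by rw [hp0]; exact hq) hip hgp

lemma winsPos_to_winsGen {f : B → B} {q : B} (h : G.WinsPos Ω pl f q) :
    ∃ σ, G.WinsGen Ω pl σ q := by
  refine ⟨fun l => f (l.getLastD q), ?_, ?_, ?_⟩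
  · intro l b hlast ho hmv
    have : l.getLastD q = b := by
      rw [List.getLastD_eq_getLast?, hlast]; rfl
    show G.E b (f (l.getLastD q))
    rw [this]
    exact h.1 b ho hmv
  · intro l hh hfp hgf b hlast
    refine h.2.1 l hh hfp ?_ b hlast
    intro i b' c hb hc ho
    have hgoal := hgf i b' c hb hc ho
    rw [hgoal]
    show f ((l.take (i+1)).getLastD q) = f b'
    congr 1
    have hi : i < l.length := by
      by_contra hcon
      rw [List.getElem?_eq_none (by omega)] at hb
      cases hb
    have hlen : (l.take (i + 1)).length = i + 1 := by
      rw [List.length_take]; omega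
    have : (l.take (i + 1)).getLast? = some b' := by
      rw [List.getLast?_eq_getElem?, hlen]
      simp only [Nat.add_sub_cancel]
      rw [List.getElem?_take]
      rw [if_pos (Nat.lt_succ_self i)]
      exact hb
    rw [List.getLastD_eq_getLast?, this]
    rfl
  · intro p hp0 hip hgp
    refine h.2.2 p hp0 hip ?_
    intro n ho
    rw [hgp n ho]
    show f (((List.range (n+1)).map p).getLastD q) = f (p n)
    congr 1
    have : ((List.range (n + 1)).map p).getLast? = some (p n) := by
      rw [List.getLast?_eq_getElem?]
      simp only [List.length_map, List.length_range, Nat.add_sub_cancel]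
      rw [List.getElem?_map]
      simp [List.getElem?_range (Nat.lt_succ_self n)]
    rw [List.getLastD_eq_getLast?, this]
    rfl

end Game


namespace Game

variable {B : Type*} {G : Game B} {Ω : B → ℕ}

lemma getLastD_irrel {l : List B} (h : l ≠ []) (a b : B) :
    l.getLastD a = l.getLastD b := by
  cases hl : l.getLast? with
  | none => exact absurd (List.getLast?_eq_none_iff.mp hl) h
  | some x =>
    rw [List.getLastD_eq_getLast?, List.getLastD_eq_getLast?, hl]
    rfl

lemma getLast?_of_ne_nil {l : List B} (h : l ≠ []) (q : B) :
    l.getLast? = some (l.getLastD q) := by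
  cases hl : l.getLast? with
  | none => exact absurd (List.getLast?_eq_none_iff.mp hl) h
  | some a => rw [List.getLastD_eq_getLast?, hl]; rfl

lemma guidedFin_append {σ : List B → B} {pl : Bool} {l : List B} {x : B}
    (hne : l ≠ []) (hg : G.GuidedFin pl σ l)
    (hx : G.owner (l.getLastD x) = pl → x = σ l) : G.GuidedFin pl σ (l ++ [x]) := by
  intro i b c hb hc ho
  have hlen : i + 1 < l.length + 1 := by
    by_contra hcon
    rw [List.getElem?_eq_none (by simp; omega)] at hc
    cases hc
  rcases lt_or_eq_of_le (Nat.lt_succ_iff.mp hlen) with hlt | heq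
  · have hb' : l[i]? = some b := by
      rw [List.getElem?_append_left (by omega)] at hb; exact hb
    have hc' : l[i + 1]? = some c := by
      rw [List.getElem?_append_left hlt] at hc; exact hc
    have htk : (l ++ [x]).take (i + 1) = l.take (i + 1) := by
      rw [List.take_append]
      have h0 : i + 1 - l.length = 0 := by omega
      rw [h0, List.take_zero, List.append_nil]
    rw [htk]
    exact hg i b c hb' hc' ho
  · -- i + 1 = l.length
    have hcx : c = x := by
      rw [heq, List.getElem?_concat_length] at hc
      exact (Option.some_inj.mp hc).symm
    have hbl : b = l.getLastD x := by
      have h1 : l.getLast? = some (l.getLastD x) := getLast?_of_ne_nil hne x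
      rw [List.getLast?_eq_getElem?] at h1
      rw [List.getElem?_append_left (by omega), show i = l.length - 1 by omega] at hb
      rw [h1] at hb
      exact (Option.some_inj.mp hb).symm
    have htk : (l ++ [x]).take (i + 1) = l := by
      rw [heq, List.take_left]
    rw [htk, hcx]
    exact hx (by rwa [hbl] at ho)

open Classical in
/-- The play where both `σf` (for player `false`) and `σt` (for `true`) are followed. -/
noncomputable def hist (G : Game B) (σf σt : List B → B) (q : B) : ℕ → List B
  | 0 => [q]
  | n + 1 =>
    let l := hist G σf σt q n
    let b := l.getLastD q
    if ∃ c, G.E b c then l ++ [if G.owner b then σt l else σf l] else l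

lemma not_both {σf σt : List B → B} {q : B}
    (hf : G.WinsGen Ω false σf q) (ht : G.WinsGen Ω true σt q) : False := by
  classical
  set H := hist G σf σt q with hH
  have hstep : ∀ n, H (n + 1) = if ∃ c, G.E ((H n).getLastD q) c then
      H n ++ [if G.owner ((H n).getLastD q) then σt (H n) else σf (H n)] else H n := by
    intro n; rfl
  -- basic invariants
  have hinv : ∀ n, H n ≠ [] ∧ (H n).head? = some q ∧ (H n).Chain' G.E ∧
      G.GuidedFin false σf (H n) ∧ G.GuidedFin true σt (H n) := by
    intro n
    induction n with
    | zero =>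
      refine ⟨by simp [hH, hist], by simp [hH, hist], by simp [hH, hist, List.Chain'], ?_, ?_⟩ <;>
      · intro i b c hb hc ho
        have : i + 1 < 1 := by
          by_contra hcon
          rw [List.getElem?_eq_none (by simp [hH, hist])] at hc
          cases hc
        omega
    | succ n ih =>
      obtain ⟨hne, hhead, hchain, hgf, hgt⟩ := ih
      rw [hstep n]
      by_cases hmv : ∃ c, G.E ((H n).getLastD q) c
      · rw [if_pos hmv]
        have hlast := getLast?_of_ne_nil hne q
        set x := if G.owner ((H n).getLastD q) then σt (H n) else σf (H n) with hx
        have hEx : G.E ((H n).getLastD q) x := by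
          rw [hx]
          by_cases ho : G.owner ((H n).getLastD q)
          · rw [if_pos ho]; exact ht.1 (H n) _ hlast ho hmv
          · rw [if_neg ho]
            refine hf.1 (H n) _ hlast ?_ hmv
            simp only [Bool.not_eq_true] at ho
            exact ho
        refine ⟨by simp, ?_, ?_, ?_, ?_⟩
        · rw [List.head?_append_of_ne_nil _ hne]; exact hhead
        · rw [show (H n ++ [x]).Chain' G.E ↔ _ from List.isChain_append]
          refine ⟨hchain, List.isChain_singleton x, ?_⟩
          intro y hy z hz
          simp only [List.head?_cons, Option.mem_def, Option.some_inj] at hz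
          rw [hlast] at hy
          simp only [Option.mem_def, Option.some_inj] at hy
          rw [← hy, ← hz]; exact hEx
        · refine guidedFin_append hne hgf ?_
          intro ho
          rw [getLastD_irrel hne x q] at ho
          have hcond : ¬ (G.owner ((H n).getLastD q) = true) := by rw [ho]; simp
          rw [hx, if_neg hcond]
        · refine guidedFin_append hne hgt ?_
          intro ho
          rw [getLastD_irrel hne x q] at ho
          rw [hx, if_pos ho]
      · rw [if_neg hmv]; exact ⟨hne, hhead, hchain, hgf, hgt⟩
  by_cases hstuck : ∃ n, ∀ c, ¬ G.E ((H n).getLastD q) c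
  · obtain ⟨n, hn⟩ := hstuck
    obtain ⟨hne, hhead, hchain, hgf, hgt⟩ := hinv n
    have hlast := getLast?_of_ne_nil hne q
    have hfin : G.FinPlay (H n) := by
      refine ⟨hne, hchain, ?_⟩
      intro b hb c
      rw [hlast] at hb
      rw [← Option.some_inj.mp hb]
      exact hn c
    have r1 := hf.2.1 (H n) hhead hfin hgf _ hlast
    have r2 := ht.2.1 (H n) hhead hfin hgt _ hlast
    cases hcase : G.owner ((H n).getLastD q)
    · exact r1 hcase
    · exact r2 hcase
  · push_neg at hstuck
    -- infinite play
    set p : ℕ → B := fun n => (H n).getLastD q with hp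
    have hkey : ∀ n, H n = (List.range (n + 1)).map p := by
      intro n
      induction n with
      | zero =>
        rw [show List.range 1 = [0] from by simp [List.range_succ]]
        rw [List.map_singleton]
        show H 0 = [(H 0).getLastD q]
        rfl
      | succ n ih =>
        have h1 : H (n + 1) = H n ++ [p (n + 1)] := by
          rw [hstep n, if_pos (hstuck n)]
          congr 1
          rw [hp]
          simp only []
          rw [hstep n, if_pos (hstuck n), List.getLastD_concat]
        rw [h1, ih]
        conv_rhs => rw [List.range_succ]
        rw [List.map_append, List.map_singleton]
    have hx : ∀ n, p (n + 1) =
        if G.owner (p n) then σt (H n) else σf (H n) := by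
      intro n
      rw [hp]
      simp only []
      rw [hstep n, if_pos (hstuck n), List.getLastD_concat]
    have hp0 : p 0 = q := by simp [hp, hH, hist]
    have hips : G.InfPlay p := by
      intro n
      obtain ⟨hne, hhead, hchain, hgf, hgt⟩ := hinv n
      have hlast := getLast?_of_ne_nil hne q
      rw [hx n]
      by_cases ho : G.owner (p n)
      · rw [if_pos ho]; exact ht.1 (H n) _ hlast ho (hstuck n)
      · rw [if_neg ho]
        refine hf.1 (H n) _ hlast ?_ (hstuck n)
        simp only [Bool.not_eq_true] at ho
        exact ho
    have hgif : G.GuidedInf false σf p := by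
      intro n ho
      rw [hx n, if_neg (by simp [ho]), ← hkey n]
    have hgit : G.GuidedInf true σt p := by
      intro n ho
      rw [hx n, if_pos ho, ← hkey n]
    exact parityWins_not_both (hf.2.2 p hp0 hips hgif) (ht.2.2 p hp0 hips hgit)

end Game


namespace Game

variable {B : Type*} {G : Game B} {Ω : B → ℕ} {pl : Bool}

lemma ordinal_seq_stab (a : ℕ → Ordinal) (h : ∀ n, a (n + 1) ≤ a n) :
    ∃ N, ∀ n, N ≤ n → a n = a N := by
  have hmono : ∀ m n, m ≤ n → a n ≤ a m := by
    intro m n hmn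
    induction hmn with
    | refl => exact le_refl _
    | step _ ih => exact le_trans (h _) ih
  have hne : (Set.range a).Nonempty := ⟨a 0, 0, rfl⟩
  obtain ⟨N, hN⟩ := csInf_mem hne
  refine ⟨N, fun n hn => le_antisymm (hmono N n hn) ?_⟩
  rw [hN]
  exact csInf_le' ⟨n, rfl⟩

lemma par_empty : G.Par Ω pl ∅ G.dmove := by
  refine ⟨fun b _ h => G.dmove_spec b h, ?_, ?_, ?_, ?_⟩ <;>
    · intro v hv
      exact absurd hv (Set.notMem_empty v)

lemma par_union {ι : Type*} (U : ι → Set B) (g : ι → B → B)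
    (hpar : ∀ i, G.Par Ω pl (U i) (g i)) :
    ∃ g', G.Par Ω pl (⋃ i, U i) g' := by
  classical
  rcases isEmpty_or_nonempty ι with hι | hι
  · refine ⟨G.dmove, ?_⟩
    rw [Set.iUnion_of_empty]
    exact par_empty
  set r := @WellOrderingRel ι
  set θ : ι → Ordinal := fun i => (Ordinal.typein r).toRelEmbedding i with hθ
  have θinj : Function.Injective θ := fun a b hab => (Ordinal.typein_inj r).mp hab
  set S : B → Set Ordinal := fun v => {o | ∃ i, θ i = o ∧ v ∈ U i} with hS
  have key : ∀ v, v ∈ (⋃ i, U i) → ∃ i, θ i = sInf (S v) ∧ v ∈ U i := by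
    intro v hv
    obtain ⟨_, ⟨i, rfl⟩, hvi⟩ := hv
    exact csInf_mem (⟨θ i, i, rfl, hvi⟩ : (S v).Nonempty)
  choose! io hio1 hio2 using key
  set g' : B → B := fun v => if v ∈ (⋃ i, U i) then g (io v) v else G.dmove v with hg'
  have hg'mem : ∀ v (hv : v ∈ ⋃ i, U i), g' v = g (io v) v := by
    intro v hv; rw [hg']; simp only [if_pos hv]
  have hmemio : ∀ v (hv : v ∈ ⋃ i, U i), v ∈ U (io v) := hio2
  have hmono : ∀ v w, v ∈ (⋃ i, U i) → w ∈ U (io v) → sInf (S w) ≤ sInf (S v) := by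
    intro v w hv hw
    rw [← hio1 v hv]
    exact csInf_le' ⟨io v, rfl, hw⟩
  have huniq : ∀ v w, v ∈ (⋃ i, U i) → w ∈ (⋃ i, U i) →
      sInf (S w) = sInf (S v) → io w = io v := by
    intro v w hv hw hs
    apply θinj
    rw [hio1 w hw, hio1 v hv, hs]
  have hsub : ∀ i, U i ⊆ ⋃ j, U j := fun i => Set.subset_iUnion U i
  refine ⟨g', ?_, ?_, ?_, ?_, ?_⟩
  · -- legal
    intro v ho hmv
    by_cases hv : v ∈ ⋃ i, U i
    · rw [hg'mem v hv]; exact (hpar (io v)).legal v ho hmv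
    · show G.E v (if v ∈ ⋃ i, U i then g (io v) v else G.dmove v)
      rw [if_neg hv]; exact G.dmove_spec v hmv
  · -- closedOp
    intro v hv ho w hE
    exact hsub _ ((hpar (io v)).closedOp v (hmemio v hv) ho w hE)
  · -- closedOwn
    intro v hv ho hmv
    rw [hg'mem v hv]
    exact hsub _ ((hpar (io v)).closedOwn v (hmemio v hv) ho hmv)
  · -- stuckOp
    intro v hv hst
    exact (hpar (io v)).stuckOp v (hmemio v hv) hst
  · -- wins
    intro p hp0 hip hgp
    have hstay : ∀ n, p n ∈ ⋃ i, U i := by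
      intro n
      induction n with
      | zero => exact hp0
      | succ n ih =>
        by_cases ho : G.owner (p n) = pl
        · rw [hgp n ho, hg'mem _ ih]
          exact hsub _ ((hpar (io (p n))).closedOwn _ (hmemio _ ih) ho ⟨_, hip n⟩)
        · exact hsub _ ((hpar (io (p n))).closedOp _ (hmemio _ ih) ho _ (hip n))
    have hstep : ∀ n, p (n + 1) ∈ U (io (p n)) := by
      intro n
      by_cases ho : G.owner (p n) = pl
      · rw [hgp n ho, hg'mem _ (hstay n)]
        exact (hpar (io (p n))).closedOwn _ (hmemio _ (hstay n)) ho ⟨_, hip n⟩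
      · exact (hpar (io (p n))).closedOp _ (hmemio _ (hstay n)) ho _ (hip n)
    have hanti : ∀ n, sInf (S (p (n + 1))) ≤ sInf (S (p n)) := by
      intro n
      exact hmono _ _ (hstay n) (hstep n)
    obtain ⟨N, hNs⟩ := ordinal_seq_stab (fun n => sInf (S (p n))) hanti
    have hioN : ∀ n, N ≤ n → io (p n) = io (p N) := by
      intro n hn
      exact huniq _ _ (hstay N) (hstay n) (hNs n hn)
    set j := io (p N) with hj
    refine parityWins_shift N ((hpar j).wins (fun m => p (m + N)) ?_ ?_ ?_)
    · show p (0 + N) ∈ U j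
      rw [Nat.zero_add]
      exact hmemio _ (hstay N)
    · intro m
      show G.E (p (m + N)) (p (m + 1 + N))
      have he : m + 1 + N = m + N + 1 := by omega
      rw [he]
      exact hip (m + N)
    · intro m ho
      have h1 := hgp (m + N) ho
      rw [hg'mem _ (hstay (m + N))] at h1
      rw [hioN (m + N) (Nat.le_add_left N m)] at h1
      show p (m + 1 + N) = g j (p (m + N))
      have he : m + 1 + N = m + N + 1 := by omega
      rw [he]
      exact h1

end Game


namespace Game

universe u

variable {B : Type u} {G : Game B} {Ω : B → ℕ} {pl : Bool}

lemma no_inf_descent (a : ℕ → Ordinal.{u}) (h : ∀ n, a (n + 1) < a n) : False := by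
  have hne : (Set.range a).Nonempty := ⟨a 0, 0, rfl⟩
  obtain ⟨N, hN⟩ := csInf_mem hne
  have h1 : sInf (Set.range a) ≤ a (N + 1) := csInf_le' ⟨N + 1, rfl⟩
  rw [← hN] at h1
  exact absurd (h N) (not_lt.mpr h1)

lemma par_insert {U : Set B} {g : B → B} (hpar : G.Par Ω pl U g) (v w₀ : B)
    (hv : v ∉ U)
    (h1 : G.owner v = pl → (∃ c, G.E v c) → G.E v w₀ ∧ w₀ ∈ U)
    (h2 : G.owner v ≠ pl → ∀ w, G.E v w → w ∈ U)
    (h3 : (∀ w, ¬ G.E v w) → G.owner v ≠ pl) :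
    G.Par Ω pl (insert v U) (Function.update g v w₀) := by
  classical
  set g' := Function.update g v w₀ with hg'
  have hagree : ∀ u, u ≠ v → g' u = g u := fun u hu => Function.update_of_ne hu _ _
  have hgv : g' v = w₀ := Function.update_self _ _ _
  have hUne : ∀ u ∈ U, u ≠ v := fun u hu he => hv (he ▸ hu)
  have hfromU : ∀ (p : ℕ → B), G.InfPlay p → G.PosGuidedInf pl g' p →
      ∀ k, p k ∈ U → ParityWins Ω pl p := by
    intro p hip hgp k hk
    have hstay : ∀ m, p (m + k) ∈ U := by
      intro m
      induction m with
      | zero => rwa [Nat.zero_add]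
      | succ m ih =>
        have heq : m + 1 + k = m + k + 1 := by omega
        rw [heq]
        by_cases ho : G.owner (p (m + k)) = pl
        · rw [hgp (m + k) ho, hagree _ (hUne _ ih)]
          exact hpar.closedOwn _ ih ho ⟨_, hip (m + k)⟩
        · exact hpar.closedOp _ ih ho _ (hip (m + k))
    refine parityWins_shift k (hpar.wins (fun m => p (m + k)) (hstay 0) ?_ ?_)
    · intro m
      show G.E (p (m + k)) (p (m + 1 + k))
      have heq : m + 1 + k = m + k + 1 := by omega
      rw [heq]
      exact hip (m + k)
    · intro m ho
      show p (m + 1 + k) = g (p (m + k))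
      have heq : m + 1 + k = m + k + 1 := by omega
      rw [heq, hgp (m + k) ho, hagree _ (hUne _ (hstay m))]
  refine ⟨?_, ?_, ?_, ?_, ?_⟩
  · -- legal
    intro b ho hmv
    by_cases hb : b = v
    · subst hb; rw [hgv]; exact (h1 ho hmv).1
    · rw [hagree _ hb]; exact hpar.legal b ho hmv
  · -- closedOp
    intro u hu ho w hE
    rcases hu with hu | hu
    · exact Or.inr (h2 (hu ▸ ho) w (hu ▸ hE))
    · exact Or.inr (hpar.closedOp u hu ho w hE)
  · -- closedOwn
    intro u hu ho hmv
    rcases hu with hu | hu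
    · subst hu; rw [hgv]; exact Or.inr (h1 ho hmv).2
    · rw [hagree _ (hUne _ hu)]; exact Or.inr (hpar.closedOwn u hu ho hmv)
  · -- stuckOp
    intro u hu hst
    rcases hu with hu | hu
    · exact hu ▸ h3 (hu ▸ hst)
    · exact hpar.stuckOp u hu hst
  · -- wins
    intro p hp0 hip hgp
    rcases hp0 with hp0 | hp0
    · -- p 0 = v
      have h1U : p 1 ∈ U := by
        by_cases ho : G.owner (p 0) = pl
        · rw [hgp 0 ho, hp0, hgv]
          exact (h1 (hp0 ▸ ho) ⟨_, hp0 ▸ hip 0⟩).2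
        · exact h2 (hp0 ▸ ho) _ (hp0 ▸ hip 0)
      exact hfromU p hip hgp 1 h1U
    · exact hfromU p hip hgp 0 hp0

/-! ### Attractors -/

variable (G pl) in
def attF (Z N : Set B) (X : Set B) : Set B :=
  {v | v ∈ N ∨ (v ∈ Z ∧ G.owner v = pl ∧ ∃ w, G.E v w ∧ w ∈ Z ∧ w ∈ X) ∨
       (v ∈ Z ∧ G.owner v ≠ pl ∧ ∀ w, G.E v w → w ∈ X)}

variable (G pl) in
noncomputable def attIter (Z N : Set B) : Ordinal.{u} → Set B
  | o => attF G pl Z N (⋃ β : {β : Ordinal.{u} // β < o}, attIter Z N β.1)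
  termination_by o => o
  decreasing_by exact β.2

lemma attIter_def (Z N : Set B) (o : Ordinal.{u}) :
    attIter G pl Z N o = attF G pl Z N (⋃ β : {β : Ordinal.{u} // β < o}, attIter G pl Z N β.1) := by
  rw [attIter]

variable (G pl) in
def attA (Z N : Set B) : Set B := {v | ∃ o : Ordinal.{u}, v ∈ attIter G pl Z N o}

variable (G pl) in
noncomputable def attRank (Z N : Set B) (v : B) : Ordinal.{u} :=
  sInf {o : Ordinal.{u} | v ∈ attIter G pl Z N o}

variable {Z N : Set B}

lemma att_mem_rank {v : B} (h : v ∈ attA G pl Z N) :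
    v ∈ attIter G pl Z N (attRank G pl Z N v) := csInf_mem h

lemma att_rank_le {v : B} {o : Ordinal.{u}} (h : v ∈ attIter G pl Z N o) :
    attRank G pl Z N v ≤ o := csInf_le' h

lemma att_iter_sub {o : Ordinal.{u}} : attIter G pl Z N o ⊆ attA G pl Z N :=
  fun v hv => ⟨o, hv⟩

lemma att_base : N ⊆ attA G pl Z N := by
  intro v hv
  exact ⟨0, by rw [attIter_def]; exact Or.inl hv⟩

lemma att_closure_pl {v w : B} (hvZ : v ∈ Z) (ho : G.owner v = pl)
    (hE : G.E v w) (hwZ : w ∈ Z) (hw : w ∈ attA G pl Z N) : v ∈ attA G pl Z N := by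
  refine ⟨attRank G pl Z N w + 1, ?_⟩
  rw [attIter_def]
  refine Or.inr (Or.inl ⟨hvZ, ho, w, hE, hwZ, ?_⟩)
  exact Set.mem_iUnion.mpr ⟨⟨_, lt_add_one _⟩, att_mem_rank hw⟩

lemma att_closure_op {v : B} (hvZ : v ∈ Z) (ho : G.owner v ≠ pl)
    (hw : ∀ w, G.E v w → w ∈ attA G pl Z N) : v ∈ attA G pl Z N := by
  refine ⟨(⨆ w : {w // G.E v w}, attRank G pl Z N w.1) + 1, ?_⟩
  rw [attIter_def]
  refine Or.inr (Or.inr ⟨hvZ, ho, ?_⟩)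
  intro w hEw
  have hlt : attRank G pl Z N w < (⨆ w : {w // G.E v w}, attRank G pl Z N w.1) + 1 :=
    calc attRank G pl Z N w ≤ ⨆ w : {w // G.E v w}, attRank G pl Z N w.1 :=
          le_ciSup (Ordinal.bddAbove_range _) (⟨w, hEw⟩ : {w // G.E v w})
      _ < _ := lt_add_one _
  exact Set.mem_iUnion.mpr ⟨⟨attRank G pl Z N w, hlt⟩, att_mem_rank (hw w hEw)⟩

lemma att_union_rank_lt {v w : B} (hw : w ∈ ⋃ β : {β : Ordinal.{u} // β < attRank G pl Z N v},
    attIter G pl Z N β.1) : w ∈ attA G pl Z N ∧ attRank G pl Z N w < attRank G pl Z N v := by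
  obtain ⟨_, ⟨β, rfl⟩, hwβ⟩ := hw
  exact ⟨att_iter_sub hwβ, lt_of_le_of_lt (att_rank_le hwβ) β.2⟩

lemma att_descent_pl {v : B} (hv : v ∈ attA G pl Z N) (hvN : v ∉ N)
    (ho : G.owner v = pl) : ∃ w, G.E v w ∧ w ∈ Z ∧ w ∈ attA G pl Z N ∧
      attRank G pl Z N w < attRank G pl Z N v := by
  have h := att_mem_rank hv
  rw [attIter_def] at h
  rcases h with h | h | h
  · exact absurd h hvN
  · obtain ⟨_, _, w, hEw, hwZ, hwX⟩ := h
    obtain ⟨hwA, hwlt⟩ := att_union_rank_lt hwX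
    exact ⟨w, hEw, hwZ, hwA, hwlt⟩
  · exact absurd ho h.2.1
lemma att_descent_op {v : B} (hv : v ∈ attA G pl Z N) (hvN : v ∉ N)
    (ho : G.owner v ≠ pl) : ∀ w, G.E v w → w ∈ attA G pl Z N ∧
      attRank G pl Z N w < attRank G pl Z N v := by
  have h := att_mem_rank hv
  rw [attIter_def] at h
  rcases h with h | h | h
  · exact absurd h hvN
  · exact absurd h.2.1 ho
  · intro w hEw
    exact att_union_rank_lt (h.2.2 w hEw)

lemma att_sub_Z (hNZ : N ⊆ Z) : attA G pl Z N ⊆ Z := by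
  rintro v ⟨o, hv⟩
  rw [attIter_def] at hv
  rcases hv with hv | hv | hv
  · exact hNZ hv
  · exact hv.1
  · exact hv.1

end Game


namespace Game

universe u

variable {B : Type u}

theorem main_claim : ∀ (n : ℕ) (G : Game B) (Ω : B → ℕ),
    (Set.range Ω).Finite → (Set.range Ω).ncard ≤ n →
    ∃ (W : B → Bool) (f : Bool → B → B),
      ∀ pl, G.Par Ω pl {b | W b = pl} (f pl) := by
  intro n
  induction n with
  | zero =>
    intro G Ω hfin hn
    have hrange : Set.range Ω = ∅ := by
      rw [← Set.ncard_eq_zero hfin]; omega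
    have hB : IsEmpty B := by
      by_contra hc
      rw [not_isEmpty_iff] at hc
      exact absurd hrange (Set.nonempty_iff_ne_empty.mp (Set.range_nonempty Ω))
    refine ⟨fun _ => false, fun _ => id, fun pl => ⟨?_, ?_, ?_, ?_, ?_⟩⟩
    · intro b; exact (hB.false b).elim
    · intro v hv; exact (hB.false v).elim
    · intro v hv; exact (hB.false v).elim
    · intro v hv; exact (hB.false v).elim
    · intro p hp; exact (hB.false (p 0)).elim
  | succ n IH =>
    intro G Ω hfin hn
    classical
    rcases isEmpty_or_nonempty B with hB | hB
    · refine ⟨fun _ => false, fun _ => id, fun pl => ⟨?_, ?_, ?_, ?_, ?_⟩⟩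
      · intro b; exact (hB.false b).elim
      · intro v hv; exact (hB.false v).elim
      · intro v hv; exact (hB.false v).elim
      · intro v hv; exact (hB.false v).elim
      · intro p hp; exact (hB.false (p 0)).elim
    -- the maximal priority d and its parity π
    have h1 : hfin.toFinset.Nonempty := by
      rw [Set.Finite.toFinset_nonempty]; exact Set.range_nonempty Ω
    set d := hfin.toFinset.max' h1 with hd
    have hdmem : d ∈ Set.range Ω := by
      rw [← Set.Finite.mem_toFinset hfin]; exact Finset.max'_mem _ _
    have hdmax : ∀ k ∈ Set.range Ω, k ≤ d := by
      intro k hk; exact Finset.le_max' _ _ ((Set.Finite.mem_toFinset hfin).mpr hk)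
    set π : Bool := decide (d % 2 = 1) with hπdef
    have hπ : d % 2 = cond π 1 0 := by
      by_cases h : d % 2 = 1
      · simp [hπdef, h]
      · have h0 : d % 2 = 0 := by omega
        simp [hπdef, h0]
    set op : Bool := !π with hop
    have hople : ∀ b : Bool, b ≠ op ↔ b = π := by
      intro b; rw [hop]; cases b <;> cases π <;> simp
    have hople' : ∀ b : Bool, b ≠ π ↔ b = op := by
      intro b; rw [hop]; cases b <;> cases π <;> simp
    -- the maximal op-paradise
    set ι := {x : Set B × (B → B) // G.Par Ω op x.1 x.2} with hι
    obtain ⟨gbar, hgbar⟩ := par_union (fun i : ι => i.1.1) (fun i : ι => i.1.2)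
      (fun i : ι => i.2)
    set Wbar := ⋃ i : ι, i.1.1 with hWbar
    have hmax : ∀ (U : Set B) (g : B → B), G.Par Ω op U g → U ⊆ Wbar := by
      intro U g h u hu
      exact Set.mem_iUnion.mpr ⟨⟨(U, g), h⟩, hu⟩
    set Z := Wbarᶜ with hZ
    have hZW : ∀ v : B, v ∈ Z ↔ v ∉ Wbar := fun v => Iff.rfl
    have fact_i : ∀ v ∈ Z, G.owner v = op → ∀ w, G.E v w → w ∈ Z := by
      intro v hv ho w hE
      rw [hZW]
      intro hwW
      refine hv (hmax _ _ (par_insert hgbar v w hv ?_ ?_ ?_) (Set.mem_insert v Wbar))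
      · exact fun _ _ => ⟨hE, hwW⟩
      · exact fun h => absurd ho h
      · exact fun hst => absurd hE (hst w)
    have fact_ii : ∀ v ∈ Z, G.owner v ≠ op → ∃ w, G.E v w ∧ w ∈ Z := by
      intro v hv ho
      by_contra hcon
      push_neg at hcon
      have hall : ∀ w, G.E v w → w ∈ Wbar := by
        intro w hE
        by_contra hW
        exact (hcon w hE) hW
      refine hv (hmax _ _ (par_insert hgbar v (gbar v) hv ?_ ?_ ?_)
        (Set.mem_insert v Wbar))
      · exact fun h _ => absurd h ho
      · exact fun _ => hall
      · exact fun _ => ho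
    -- attractor to the maximal priority
    set N : Set B := {v | v ∈ Z ∧ Ω v = d} with hN
    have hNZ : N ⊆ Z := fun v hv => hv.1
    set A := attA G π Z N with hA
    have hAZ : A ⊆ Z := att_sub_Z hNZ
    -- the subgame on Z \ A
    set G' : Game B := ⟨G.owner, fun v w => G.E v w ∧ v ∈ Z \ A ∧ w ∈ Z \ A⟩ with hG'
    have hG'own : ∀ v, G'.owner v = G.owner v := fun v => rfl
    obtain ⟨Ω', W', f', hPar', hΩ'ZA⟩ : ∃ (Ω' : B → ℕ) (W' : B → Bool) (f' : Bool → B → B),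
        (∀ pl, G'.Par Ω' pl {b | W' b = pl} (f' pl)) ∧ (∀ v ∈ Z \ A, Ω' v = Ω v) := by
      rcases Set.eq_empty_or_nonempty (Z \ A) with hZA | ⟨z₀, hz₀⟩
      · refine ⟨Ω, fun b => !G.owner b, fun _ => id, ?_, fun v _ => rfl⟩
        intro pl
        have hnoE : ∀ v w : B, ¬ G'.E v w := by
          intro v w hE
          rw [hG'] at hE
          have := hE.2.1
          rw [hZA] at this
          exact this
        refine ⟨?_, ?_, ?_, ?_, ?_⟩
        · intro b ho ⟨c, hc⟩; exact absurd hc (hnoE b c)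
        · intro v hv ho w hE; exact absurd hE (hnoE v w)
        · intro v hv ho ⟨c, hc⟩; exact absurd hc (hnoE v c)
        · intro v hv hst
          have : (!G.owner v) = pl := hv
          rw [hG'own, ← this]
          exact (Bool.not_ne_self (G.owner v)).symm
        · intro p hp hip; exact absurd (hip 0) (hnoE _ _)
      · set Ω'' : B → ℕ := fun v => if v ∈ Z \ A then Ω v else Ω z₀ with hΩ''
        have hsub : Set.range Ω'' ⊆ (Set.range Ω) \ {d} := by
          rintro k ⟨v, rfl⟩
          show (if v ∈ Z \ A then Ω v else Ω z₀) ∈ Set.range Ω \ {d}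
          by_cases hv : v ∈ Z \ A
          · rw [if_pos hv]
            refine ⟨⟨v, rfl⟩, ?_⟩
            intro hvd
            exact hv.2 (att_base ⟨hv.1, hvd⟩)
          · rw [if_neg hv]
            refine ⟨⟨z₀, rfl⟩, ?_⟩
            intro hvd
            exact hz₀.2 (att_base ⟨hz₀.1, hvd⟩)
        have hfin'' : (Set.range Ω'').Finite :=
          (hfin.diff : (Set.range Ω \ {d}).Finite).subset hsub
        have hcard : (Set.range Ω'').ncard ≤ n := by
          have h2 : (Set.range Ω'').ncard ≤ ((Set.range Ω) \ {d}).ncard :=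
            Set.ncard_le_ncard hsub (hfin.diff : (Set.range Ω \ {d}).Finite)
          have h3 : ((Set.range Ω) \ {d}).ncard < (Set.range Ω).ncard :=
            Set.ncard_diff_singleton_lt_of_mem hdmem hfin
          omega
        obtain ⟨W', f', hPar'⟩ := IH G' Ω'' hfin'' hcard
        exact ⟨Ω'', W', f', hPar', fun v hv => if_pos hv⟩
    -- the op-subwinning region inside Z \ A is empty
    set W'' := {b | W' b = op} ∩ (Z \ A) with hW''
    have hG'stuck : ∀ v ∈ W'', G.owner v = op → ∃ c, G'.E v c := by
      intro v hv ho
      by_contra hst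
      push_neg at hst
      have := (hPar' op).stuckOp v hv.1 hst
      rw [hG'own] at this
      exact this ho
    have hParS : G.Par Ω op (Wbar ∪ W'')
        (fun v => if v ∈ Wbar then gbar v else
          if v ∈ W'' then f' op v else G.dmove v) := by
      set h : B → B := fun v => if v ∈ Wbar then gbar v else
        if v ∈ W'' then f' op v else G.dmove v with hh
      have hWb : ∀ v ∈ Wbar, h v = gbar v := fun v hv => if_pos hv
      have hW2 : ∀ v ∈ W'', h v = f' op v := by
        intro v hv
        have hvW : v ∉ Wbar := (hZW v).mp hv.2.1
        rw [hh]
        simp only [if_neg hvW, if_pos hv]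
      have hW2move : ∀ v ∈ W'', G.owner v = op → (∃ c, G.E v c) →
          G.E v (f' op v) ∧ f' op v ∈ W'' := by
        intro v hv ho _
        obtain ⟨c, hc⟩ := hG'stuck v hv ho
        have hleg : G'.E v (f' op v) := (hPar' op).legal v (by rw [hG'own]; exact ho) ⟨c, hc⟩
        have hown : f' op v ∈ {b | W' b = op} :=
          (hPar' op).closedOwn v hv.1 (by rw [hG'own]; exact ho) ⟨c, hc⟩
        exact ⟨hleg.1, hown, hleg.2.2⟩
      have hW2op : ∀ v ∈ W'', G.owner v ≠ op → ∀ w, G.E v w → w ∈ Wbar ∪ W'' := by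
        intro v hv ho w hE
        by_cases hwW : w ∈ Wbar
        · exact Or.inl hwW
        · have hwZ : w ∈ Z := hwW
          have hvπ : G.owner v = π := (hople _).mp ho
          have hwA : w ∉ A := by
            intro hwA
            exact hv.2.2 (att_closure_pl hv.2.1 hvπ hE hwZ hwA)
          have hE' : G'.E v w := ⟨hE, hv.2, hwZ, hwA⟩
          refine Or.inr ⟨(hPar' op).closedOp v hv.1 ?_ w hE', hwZ, hwA⟩
          rw [hG'own]; exact ho
      -- plays that reach Wbar are won
      have hfromW : ∀ (p : ℕ → B), G.InfPlay p → G.PosGuidedInf op h p →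
          ∀ k, p k ∈ Wbar → ParityWins Ω op p := by
        intro p hip hgp k hk
        have hstay : ∀ m, p (m + k) ∈ Wbar := by
          intro m
          induction m with
          | zero => rwa [Nat.zero_add]
          | succ m ih =>
            have heq : m + 1 + k = m + k + 1 := by omega
            rw [heq]
            by_cases ho : G.owner (p (m + k)) = op
            · rw [hgp (m + k) ho, hWb _ ih]
              exact hgbar.closedOwn _ ih ho ⟨_, hip (m + k)⟩
            · exact hgbar.closedOp _ ih ho _ (hip (m + k))
        refine parityWins_shift k (hgbar.wins (fun m => p (m + k)) (hstay 0) ?_ ?_)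
        · intro m
          show G.E (p (m + k)) (p (m + 1 + k))
          have heq : m + 1 + k = m + k + 1 := by omega
          rw [heq]; exact hip (m + k)
        · intro m ho
          show p (m + 1 + k) = gbar (p (m + k))
          have heq : m + 1 + k = m + k + 1 := by omega
          rw [heq, hgp (m + k) ho, hWb _ (hstay m)]
      refine ⟨?_, ?_, ?_, ?_, ?_⟩
      · -- legal
        intro v ho hmv
        by_cases hv : v ∈ Wbar
        · rw [hWb v hv]; exact hgbar.legal v ho hmv
        · by_cases hv2 : v ∈ W''
          · rw [hW2 v hv2]; exact (hW2move v hv2 ho hmv).1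
          · rw [hh]
            simp only [if_neg hv, if_neg hv2]
            exact G.dmove_spec v hmv
      · -- closedOp
        intro v hv ho w hE
        rcases hv with hv | hv
        · exact Or.inl (hgbar.closedOp v hv ho w hE)
        · exact hW2op v hv ho w hE
      · -- closedOwn
        intro v hv ho hmv
        rcases hv with hv | hv
        · rw [hWb v hv]; exact Or.inl (hgbar.closedOwn v hv ho hmv)
        · rw [hW2 v hv]; exact Or.inr (hW2move v hv ho hmv).2
      · -- stuckOp
        intro v hv hst
        rcases hv with hv | hv
        · exact hgbar.stuckOp v hv hst
        · intro ho
          obtain ⟨c, hc⟩ := hG'stuck v hv ho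
          exact hst c hc.1
      · -- wins
        intro p hp0 hip hgp
        by_cases hreach : ∃ k, p k ∈ Wbar
        · obtain ⟨k, hk⟩ := hreach
          exact hfromW p hip hgp k hk
        · push_neg at hreach
          have hstay : ∀ m, p m ∈ W'' := by
            intro m
            induction m with
            | zero =>
              rcases hp0 with h0 | h0
              · exact absurd h0 (hreach 0)
              · exact h0
            | succ m ih =>
              by_cases ho : G.owner (p m) = op
              · rw [hgp m ho, hW2 _ ih]
                exact (hW2move _ ih ho ⟨_, hip m⟩).2
              · rcases hW2op _ ih ho _ (hip m) with hc | hc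
                · exact absurd hc (hreach (m + 1))
                · exact hc
          have hip' : G'.InfPlay p := by
            intro m
            exact ⟨hip m, (hstay m).2, (hstay (m + 1)).2⟩
          have hgp' : G'.PosGuidedInf op (f' op) p := by
            intro m ho
            rw [hG'own] at ho
            rw [hgp m ho, hW2 _ (hstay m)]
          have hw := (hPar' op).wins p (hstay 0).1 hip' hgp'
          exact parityWins_congr (fun m => hΩ'ZA _ (hstay m).2) hw
    have hW''empty : W'' = ∅ := by
      rw [Set.eq_empty_iff_forall_notMem]
      intro v hv
      exact hv.2.1 (hmax _ _ hParS (Or.inr hv))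
    have hZAμ : ∀ v ∈ Z \ A, W' v = π := by
      intro v hv
      by_contra hc
      have hvop : W' v = op := (hople' _).mp hc
      have hmem : v ∈ W'' := ⟨hvop, hv⟩
      rw [hW''empty] at hmem
      exact hmem
    -- the strategy for π on Z
    have hπop : π ≠ op := by rw [hop]; exact (Bool.not_ne_self π).symm
    have hfact_ii' : ∀ v ∈ Z, G.owner v = π → ∃ w, G.E v w ∧ w ∈ Z := by
      intro v hv ho
      exact fact_ii v hv (by rw [ho]; exact hπop)
    set fμ : B → B := fun v =>
      if h4 : v ∈ A ∧ v ∉ N ∧ G.owner v = π then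
        (att_descent_pl h4.1 h4.2.1 h4.2.2).choose
      else if h5 : v ∈ N ∧ G.owner v = π then
        (hfact_ii' v (hNZ h5.1) h5.2).choose
      else if v ∈ Z \ A then f' π v
      else G.dmove v with hfμ
    have p1 : ∀ v, ∀ (h4 : v ∈ A ∧ v ∉ N ∧ G.owner v = π),
        G.E v (fμ v) ∧ fμ v ∈ Z ∧ fμ v ∈ A ∧
          attRank G π Z N (fμ v) < attRank G π Z N v := by
      intro v h4
      rw [hfμ]
      simp only [dif_pos h4]
      exact (att_descent_pl h4.1 h4.2.1 h4.2.2).choose_spec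
    have p2 : ∀ v, ∀ (h5 : v ∈ N ∧ G.owner v = π),
        G.E v (fμ v) ∧ fμ v ∈ Z := by
      intro v h5
      have h4 : ¬ (v ∈ A ∧ v ∉ N ∧ G.owner v = π) := by
        intro h; exact h.2.1 h5.1
      rw [hfμ]
      simp only [dif_neg h4, dif_pos h5]
      exact (hfact_ii' v (hNZ h5.1) h5.2).choose_spec
    have p3 : ∀ v ∈ Z \ A, fμ v = f' π v := by
      intro v hv
      have h4 : ¬ (v ∈ A ∧ v ∉ N ∧ G.owner v = π) := fun h => hv.2 h.1
      have h5 : ¬ (v ∈ N ∧ G.owner v = π) := fun h => hv.2 (att_base h.1)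
      rw [hfμ]
      simp only [dif_neg h4, dif_neg h5, if_pos hv]
    have pZA : ∀ v ∈ Z \ A, G.owner v = π → G'.E v (fμ v) := by
      intro v hv ho
      obtain ⟨w, hEw, hwZ⟩ := hfact_ii' v hv.1 ho
      have hwA : w ∉ A := by
        intro hwA
        exact hv.2 (att_closure_pl hv.1 ho hEw hwZ hwA)
      have hmv' : ∃ c, G'.E v c := ⟨w, hEw, hv, hwZ, hwA⟩
      rw [p3 v hv]
      exact (hPar' π).legal v (by rw [hG'own]; exact ho) hmv'
    have hnextZ : ∀ v ∈ Z, G.owner v = π → fμ v ∈ Z := by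
      intro v hv ho
      by_cases hvA : v ∈ A
      · by_cases hvN : v ∈ N
        · exact (p2 v ⟨hvN, ho⟩).2
        · exact (p1 v ⟨hvA, hvN, ho⟩).2.1
      · exact ((pZA v ⟨hv, hvA⟩ ho).2.2).1
    refine ⟨fun b => if b ∈ Wbar then op else π,
      fun pl => if pl = op then gbar else fμ, ?_⟩
    have hsetop : {b | (if b ∈ Wbar then op else π) = op} = Wbar := by
      ext b
      by_cases hb : b ∈ Wbar
      · rw [Set.mem_setOf_eq, if_pos hb]
        exact ⟨fun _ => hb, fun _ => rfl⟩
      · rw [Set.mem_setOf_eq, if_neg hb]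
        exact ⟨fun h => absurd h hπop, fun h => absurd h hb⟩
    have hsetπ : {b | (if b ∈ Wbar then op else π) = π} = Z := by
      ext b
      by_cases hb : b ∈ Wbar
      · rw [Set.mem_setOf_eq, if_pos hb]
        exact ⟨fun h => absurd h.symm hπop, fun h => absurd hb h⟩
      · rw [Set.mem_setOf_eq, if_neg hb]
        exact ⟨fun _ => hb, fun _ => rfl⟩
    have hParZ : G.Par Ω π Z fμ := by
      refine ⟨?_, ?_, ?_, ?_, ?_⟩
      · -- legal
        intro v ho hmv
        by_cases hv : v ∈ Z
        · by_cases hvA : v ∈ A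
          · by_cases hvN : v ∈ N
            · exact (p2 v ⟨hvN, ho⟩).1
            · exact (p1 v ⟨hvA, hvN, ho⟩).1
          · exact (pZA v ⟨hv, hvA⟩ ho).1
        · have h4 : ¬ (v ∈ A ∧ v ∉ N ∧ G.owner v = π) := fun h => hv (hAZ h.1)
          have h5 : ¬ (v ∈ N ∧ G.owner v = π) := fun h => hv (hNZ h.1)
          have h6 : v ∉ Z \ A := fun h => hv h.1
          rw [hfμ]
          simp only [dif_neg h4, dif_neg h5, if_neg h6]
          exact G.dmove_spec v hmv
      · -- closedOp
        intro v hv ho w hE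
        exact fact_i v hv ((hople' _).mp ho) w hE
      · -- closedOwn
        intro v hv ho _
        exact hnextZ v hv ho
      · -- stuckOp
        intro v hv hst ho
        obtain ⟨w, hEw, _⟩ := hfact_ii' v hv ho
        exact hst w hEw
      · -- wins
        intro p hp0 hip hgp
        have hZstay : ∀ m, p m ∈ Z := by
          intro m
          induction m with
          | zero => exact hp0
          | succ m ih =>
            by_cases ho : G.owner (p m) = π
            · rw [hgp m ho]; exact hnextZ _ ih ho
            · exact fact_i _ ih ((hople' _).mp ho) _ (hip m)
        by_cases hNio : ∀ T, ∃ m ≥ T, p m ∈ N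
        · refine ⟨d, hπ, ?_, ?_⟩
          · intro T
            obtain ⟨m, hm, hmN⟩ := hNio T
            exact ⟨m, hm, hmN.2⟩
          · intro j hj
            obtain ⟨m, _, hmj⟩ := hj 0
            exact hdmax j ⟨p m, hmj⟩
        · push_neg at hNio
          obtain ⟨T, hT⟩ := hNio
          have hnoA : ∀ m, T ≤ m → p m ∉ A := by
            intro m₀ hm₀ hmA
            have hdesc : ∀ k, p (m₀ + k) ∈ A := by
              intro k
              induction k with
              | zero => exact hmA
              | succ k ih =>
                have hNk : p (m₀ + k) ∉ N := hT (m₀ + k) (by omega)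
                show p (m₀ + k + 1) ∈ A
                by_cases ho : G.owner (p (m₀ + k)) = π
                · rw [hgp _ ho]; exact (p1 _ ⟨ih, hNk, ho⟩).2.2.1
                · exact (att_descent_op ih hNk ho _ (hip (m₀ + k))).1
            have hdesc2 : ∀ k, attRank G π Z N (p (m₀ + (k + 1))) <
                attRank G π Z N (p (m₀ + k)) := by
              intro k
              have hNk : p (m₀ + k) ∉ N := hT (m₀ + k) (by omega)
              show attRank G π Z N (p (m₀ + k + 1)) < attRank G π Z N (p (m₀ + k))
              by_cases ho : G.owner (p (m₀ + k)) = π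
              · rw [hgp _ ho]; exact (p1 _ ⟨hdesc k, hNk, ho⟩).2.2.2
              · exact (att_descent_op (hdesc k) hNk ho _ (hip (m₀ + k))).2
            exact no_inf_descent (fun k => attRank G π Z N (p (m₀ + k))) hdesc2
          have hZA : ∀ m, T ≤ m → p m ∈ Z \ A :=
            fun m hm => ⟨hZstay m, hnoA m hm⟩
          have hip' : G'.InfPlay (fun m => p (m + T)) := by
            intro m
            show G'.E (p (m + T)) (p (m + 1 + T))
            have heq : m + 1 + T = m + T + 1 := by omega
            rw [heq]
            exact ⟨hip (m + T), hZA (m + T) (by omega), hZA (m + T + 1) (by omega)⟩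
          have hgp' : G'.PosGuidedInf π (f' π) (fun m => p (m + T)) := by
            intro m ho
            rw [hG'own] at ho
            show p (m + 1 + T) = f' π (p (m + T))
            have heq : m + 1 + T = m + T + 1 := by omega
            rw [heq, hgp _ ho, p3 _ (hZA (m + T) (by omega))]
          have hstart : W' (p (0 + T)) = π := hZAμ _ (hZA (0 + T) (by omega))
          have hw := (hPar' π).wins (fun m => p (m + T)) hstart hip' hgp'
          refine parityWins_shift T (parityWins_congr ?_ hw)
          intro m
          exact hΩ'ZA _ (hZA (m + T) (by omega))
    intro pl
    show G.Par Ω pl {b | (if b ∈ Wbar then op else π) = pl}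
      (if pl = op then gbar else fμ)
    by_cases hpl : pl = op
    · subst hpl
      rw [hsetop, if_pos rfl]
      exact hgbar
    · have hplπ : pl = π := (hople _).mp hpl
      subst hplπ
      rw [hsetπ, if_neg hπop]
      exact hParZ

end Game


/-- Positional determinacy of parity games: from every position exactly one
player has a winning strategy, and each player `pl` has a single positional
strategy winning from every position of `pl`'s winning region. -/
theorem parity_positional_determinacy {B : Type*} (G : Game B) (Ω : B → ℕ)
    (hfin : (Set.range Ω).Finite) :
    (∀ q : B, Xor' (∃ σ, G.WinsGen Ω false σ q) (∃ σ, G.WinsGen Ω true σ q)) ∧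
    (∀ pl : Bool, ∃ f : B → B,
      ∀ q : B, (∃ σ, G.WinsGen Ω pl σ q) → G.WinsPos Ω pl f q) := by
  obtain ⟨W, f, hPar⟩ := Game.main_claim (Set.range Ω).ncard G Ω hfin le_rfl
  have hwins : ∀ q : B, ∃ σ, G.WinsGen Ω (W q) σ q := by
    intro q
    exact Game.winsPos_to_winsGen (Game.Par.winsPos (hPar (W q)) rfl)
  have hnotf : ∀ q : B, W q = true → ¬ ∃ σ, G.WinsGen Ω false σ q := by
    rintro q hq ⟨σ, hσ⟩
    obtain ⟨σ', hσ'⟩ := hwins q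
    rw [hq] at hσ'
    exact Game.not_both hσ hσ'
  have hnott : ∀ q : B, W q = false → ¬ ∃ σ, G.WinsGen Ω true σ q := by
    rintro q hq ⟨σ, hσ⟩
    obtain ⟨σ', hσ'⟩ := hwins q
    rw [hq] at hσ'
    exact Game.not_both hσ' hσ
  constructor
  · intro q
    cases hWq : W q with
    | false =>
      left
      refine ⟨?_, hnott q hWq⟩
      have := hwins q
      rwa [hWq] at this
    | true =>
      right
      refine ⟨?_, hnotf q hWq⟩
      have := hwins q
      rwa [hWq] at this
  · intro pl
    refine ⟨f pl, ?_⟩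
    rintro q hσ
    have hq : W q = pl := by
      by_contra hc
      cases pl with
      | false =>
        have hWt : W q = true := by
          cases h : W q
          · exact absurd h hc
          · rfl
        exact hnotf q hWt hσ
      | true =>
        have hWf : W q = false := by
          cases h : W q
          · rfl
          · exact absurd h hc
        exact hnott q hWf hσ
    exact Game.Par.winsPos (hPar pl) hq
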